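/- Let T be a tree with vertices listed in an order v_1, …, v_n such that every prefix graph T_i is connected. Then T has an incremental dominating set of size at most 2·γ(T), where γ(T) is the minimum size of a dominating set of T. -/

import Mathlib

/-- `D` is a dominating set of `G`: every vertex is in `D` or adjacent to a vertex of `D`. -/
def IsDomSet {V : Type*} (G : SimpleGraph V) (D : Finset V) : Prop :=
  ∀ v : V, v ∈ D ∨ ∃ u ∈ D, G.Adj u v

/-- The number of connected components of the subgraph of `G` induced by `S`. -/
noncomputable def numComponents {V : Type*} (G : SimpleGraph V) (S : Finset V) : ℕ :=
  Nat.card (G.induce (↑S : Set V)).ConnectedComponent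
/-- `D` is a dominating set of the prefix graph `G_i` (induced on the first `i`
vertices `v_1, …, v_i`, i.e. the vertices of `Fin n` with value `< i`);
here `D` is assumed to consist of vertices of the prefix, so that adjacency
in `G_i` coincides with adjacency in `G`. -/
def PrefixDom {n : ℕ} (G : SimpleGraph (Fin n)) (i : ℕ) (D : Finset (Fin n)) : Prop :=
  ∀ v : Fin n, v.val < i → v ∈ D ∨ ∃ u ∈ D, G.Adj u v

/-- The natural ordering `v_1, …, v_n` of `Fin n` is always-connected:
every prefix graph `G_i` (for `1 ≤ i ≤ n`) is connected. -/
def AlwaysConnected {n : ℕ} (G : SimpleGraph (Fin n)) : Prop :=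
  ∀ i : ℕ, 1 ≤ i → i ≤ n → (G.induce {v : Fin n | v.val < i}).Connected

/-- `D 1 ⊆ D 2 ⊆ ⋯ ⊆ D n` is a chain in which each `D i` is a subset of
`{v_1, …, v_i}` that is a dominating set of the prefix graph `G_i`. -/
def IncDomChain {n : ℕ} (G : SimpleGraph (Fin n)) (D : ℕ → Finset (Fin n)) : Prop :=
  (∀ i : ℕ, 1 ≤ i → i < n → D i ⊆ D (i + 1)) ∧
  (∀ i : ℕ, 1 ≤ i → i ≤ n → (∀ v ∈ D i, v.val < i) ∧ PrefixDom G i (D i))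

/-- `R` is an incremental dominating set of `G`: the final set `D n` of some
incremental dominating chain. -/
def IsIncDomSet {n : ℕ} (G : SimpleGraph (Fin n)) (R : Finset (Fin n)) : Prop :=
  ∃ D : ℕ → Finset (Fin n), IncDomChain G D ∧ R = D n

/-- An incremental connected dominating chain: additionally, each `D i`
induces a connected subgraph. -/
def IncConnDomChain {n : ℕ} (G : SimpleGraph (Fin n)) (D : ℕ → Finset (Fin n)) : Prop :=
  IncDomChain G D ∧
    ∀ i : ℕ, 1 ≤ i → i ≤ n → (G.induce (↑(D i) : Set (Fin n))).Connected

/-- `R` is an incremental connected dominating set of `G`. -/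
def IsIncConnDomSet {n : ℕ} (G : SimpleGraph (Fin n)) (R : Finset (Fin n)) : Prop :=
  ∃ D : ℕ → Finset (Fin n), IncConnDomChain G D ∧ R = D n

open Classical in
noncomputable def parAux {n : ℕ} (T : SimpleGraph (Fin n)) (s : Fin n) : Fin n :=
  if h : ∃ u, T.Adj u s ∧ u.val < s.val then h.choose else s

lemma parAux_spec {n : ℕ} (T : SimpleGraph (Fin n)) (s : Fin n)
    (h : ∃ u, T.Adj u s ∧ u.val < s.val) :
    T.Adj (parAux T s) s ∧ (parAux T s).val < s.val := by
  rw [parAux, dif_pos h]; exact h.choose_spec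

lemma earlier_unique {n : ℕ} {T : SimpleGraph (Fin n)} (hac : T.IsAcyclic)
    (hconn : AlwaysConnected T) {u w s : Fin n}
    (hu : T.Adj u s) (hus : u.val < s.val) (hw : T.Adj w s) (hws : w.val < s.val) :
    u = w := by
  by_contra huw
  have h1 : 1 ≤ s.val := by omega
  have h2 : s.val ≤ n := le_of_lt s.isLt
  have hc := hconn s.val h1 h2
  obtain ⟨W⟩ := hc.preconnected (⟨u, hus⟩ : {v : Fin n | v.val < s.val}) ⟨w, hws⟩
  let W' : T.Walk u w := W.map (SimpleGraph.Embedding.induce _).toHom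
  have hsnot : s ∉ W'.support := by
    intro hs
    rw [show W'.support = _ from SimpleGraph.Walk.support_map _ _] at hs
    obtain ⟨x, hx, hxs⟩ := List.mem_map.mp hs
    have hx2 : (x : Fin n).val < s.val := x.2
    have : (x : Fin n) = s := hxs
    omega
  have hs1 : s ∉ (W'.toPath : T.Walk u w).support :=
    fun h => hsnot (W'.support_toPath_subset h)
  have hp2 : (SimpleGraph.Walk.cons hu (SimpleGraph.Walk.cons hw.symm
      SimpleGraph.Walk.nil)).IsPath := by
    simp [SimpleGraph.Walk.isPath_def, hu.ne, hw.ne', huw]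
  have heq := SimpleGraph.isAcyclic_iff_path_unique.mp hac W'.toPath ⟨_, hp2⟩
  rw [heq] at hs1
  simp at hs1

theorem inc_dominating_le_two_gamma_tree {n : ℕ} (hn : 1 ≤ n)
    (T : SimpleGraph (Fin n)) (htree : T.Connected ∧ T.IsAcyclic)
    (hconn : AlwaysConnected T) :
    ∃ R : Finset (Fin n), IsIncDomSet T R ∧
      ∀ S : Finset (Fin n), IsDomSet T S → R.card ≤ 2 * S.card := by
  classical
  obtain ⟨S0, hS0mem, hS0min⟩ := Finset.exists_min_image
      (Finset.univ.filter (fun S : Finset (Fin n) => IsDomSet T S)) Finset.card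
      ⟨Finset.univ, Finset.mem_filter.mpr ⟨Finset.mem_univ _,
        fun v => Or.inl (Finset.mem_univ v)⟩⟩
  have hS0 : IsDomSet T S0 := (Finset.mem_filter.mp hS0mem).2
  set B : Finset (Fin n) := S0 ∪ S0.image (parAux T) with hB
  set D : ℕ → Finset (Fin n) := fun i => B.filter (fun v => v.val < i) with hD
  refine ⟨D n, ⟨D, ⟨⟨?_, ?_⟩, rfl⟩⟩, ?_⟩
  · intro i _ _
    intro v hv
    rw [Finset.mem_filter] at hv ⊢
    exact ⟨hv.1, by omega⟩
  · intro i hi _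
    constructor
    · intro v hv
      exact (Finset.mem_filter.mp hv).2
    · intro v hvi
      rcases hS0 v with hvS | ⟨s, hsS, hadj⟩
      · exact Or.inl (Finset.mem_filter.mpr ⟨Finset.mem_union_left _ hvS, hvi⟩)
      · by_cases hsi : s.val < i
        · exact Or.inr ⟨s, Finset.mem_filter.mpr ⟨Finset.mem_union_left _ hsS, hsi⟩, hadj⟩
        · have hvs : v.val < s.val := by omega
          have hex : ∃ u, T.Adj u s ∧ u.val < s.val := ⟨v, hadj.symm, hvs⟩
          obtain ⟨hadj', hlt'⟩ := parAux_spec T s hex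
          have hpv : parAux T s = v := earlier_unique htree.2 hconn hadj' hlt' hadj.symm hvs
          refine Or.inl (Finset.mem_filter.mpr ⟨Finset.mem_union_right _ ?_, hvi⟩)
          exact Finset.mem_image.mpr ⟨s, hsS, hpv⟩
  · intro S hS
    have h1 : (D n).card ≤ B.card := Finset.card_le_card (Finset.filter_subset _ _)
    have h2 : B.card ≤ S0.card + (S0.image (parAux T)).card := Finset.card_union_le _ _
    have h3 : (S0.image (parAux T)).card ≤ S0.card := Finset.card_image_le
    have h4 : S0.card ≤ S.card :=
      hS0min S (Finset.mem_filter.mpr ⟨Finset.mem_univ _, hS⟩)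
    omega
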